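/- For every finite-dimensional ℂ[L]-module ρ, there is an isomorphism of ℂ[J]-modules ℂ[J]e_V e_U ⊗_{ℂ[L]} ρ ≅ ℂ[J]e_U e_V ⊗_{ℂ[L]} ρ (that is, i_{U,V}ρ ≅ i_{V,U}ρ). -/

import Mathlib

open scoped BigOperators

set_option maxHeartbeats 1000000
set_option synthInstance.maxHeartbeats 1000000

noncomputable section

namespace Parahoric

variable {G : Type*} [Group G]

/-- An Iwahori decomposition of the subgroup `I` of `G` as `I = W·M·W̄`:
`M` normalizes `W` and `W̄`, and the multiplication map `W × M × W̄ → I` is a bijection. -/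
def IwahoriDecomp (I W M Wb : Subgroup G) : Prop :=
  M ≤ Subgroup.normalizer (W : Set G) ∧ M ≤ Subgroup.normalizer (Wb : Set G) ∧
    Set.BijOn (fun q : G × G × G => q.1 * q.2.1 * q.2.2)
      ((W : Set G) ×ˢ (M : Set G) ×ˢ (Wb : Set G)) (I : Set G)

/-- The averaging idempotent `e_H = |H|⁻¹ ∑_{h ∈ H} h` in the group algebra `ℂ[G]`. -/
def algAvg (H : Subgroup G) [Finite H] : MonoidAlgebra ℂ G :=
  letI : Fintype H := Fintype.ofFinite H
  (Nat.card H : ℂ)⁻¹ • ∑ h : H, MonoidAlgebra.of ℂ G (h : G)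

/-- The canonical algebra embedding `ℂ[L] → ℂ[G]` for a subgroup `L ≤ G`. -/
def algMap (L : Subgroup G) : MonoidAlgebra ℂ ↥L →ₐ[ℂ] MonoidAlgebra ℂ G :=
  MonoidAlgebra.mapDomainAlgHom ℂ ℂ L.subtype

/-- `ℂ[G]·e`, the range of right multiplication by `e` on the group algebra. -/
def ralg (G : Type*) [Group G] (e : MonoidAlgebra ℂ G) : Submodule ℂ (MonoidAlgebra ℂ G) :=
  LinearMap.range (LinearMap.mulRight ℂ e)

section Reps

variable {W W₁ W₂ : Type*} [AddCommGroup W] [Module ℂ W]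
  [AddCommGroup W₁] [Module ℂ W₁] [AddCommGroup W₂] [Module ℂ W₂]

/-- A ℂ-submodule is stable under a representation. -/
def Stable (π : Representation ℂ G W) (S : Submodule ℂ W) : Prop :=
  ∀ g : G, ∀ x ∈ S, π g x ∈ S

/-- Irreducibility of a representation (equivalently, simplicity of the corresponding
`ℂ[G]`-module): the space is nonzero and has no nontrivial invariant subspaces. -/
def IsIrreducible (π : Representation ℂ G W) : Prop :=
  (⊤ : Submodule ℂ W) ≠ ⊥ ∧
    ∀ T : Submodule ℂ W, Stable π T → T = ⊥ ∨ T = ⊤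

/-- Irreducibility of an invariant subspace `S` of an ambient representation. -/
def IsIrreducibleSub (π : Representation ℂ G W) (S : Submodule ℂ W) : Prop :=
  S ≠ ⊥ ∧ ∀ T : Submodule ℂ W, T ≤ S → Stable π T → T = ⊥ ∨ T = S

/-- The space `Hom_G(ρ, τ)` of intertwining operators. -/
def repHom (ρ : Representation ℂ G W₁) (τ : Representation ℂ G W₂) :
    Submodule ℂ (W₁ →ₗ[ℂ] W₂) where
  carrier := {φ | ∀ (g : G) (x : W₁), φ (ρ g x) = τ g (φ x)}
  add_mem' := by
    intro φ ψ hφ hψ g x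
    simp [hφ g x, hψ g x]
  zero_mem' := by intro g x; simp
  smul_mem' := by
    intro c φ hφ g x
    simp [hφ g x]

/-- `Hom_G(ρ, τ|_T)` where the target is an invariant subspace `T` of `τ`. -/
def homFullSub (ρ : Representation ℂ G W₁) (τ : Representation ℂ G W₂)
    (T : Submodule ℂ W₂) : Submodule ℂ (W₁ →ₗ[ℂ] ↥T) where
  carrier := {φ | ∀ (g : G) (x : W₁), (φ (ρ g x) : W₂) = τ g ↑(φ x)}
  add_mem' := by
    intro φ ψ hφ hψ g x
    simp [hφ g x, hψ g x]
  zero_mem' := by intro g x; simp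
  smul_mem' := by
    intro c φ hφ g x
    simp [hφ g x]

/-- `Hom_G(ρ|_S, τ)` where the source is an invariant subspace `S` of `ρ`. -/
def homSubFull (ρ : Representation ℂ G W₁) (S : Submodule ℂ W₁)
    (τ : Representation ℂ G W₂) : Submodule ℂ (↥S →ₗ[ℂ] W₂) where
  carrier := {φ | ∀ (g : G) (x : S) (hx : ρ g ↑x ∈ S), φ ⟨ρ g ↑x, hx⟩ = τ g (φ x)}
  add_mem' := by
    intro φ ψ hφ hψ g x hx
    simp [hφ g x hx, hψ g x hx]
  zero_mem' := by intro g x hx; simp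
  smul_mem' := by
    intro c φ hφ g x hx
    simp [hφ g x hx]

/-- `Hom_G(ρ|_S, τ|_T)` between invariant subspaces. -/
def homSubSub (ρ : Representation ℂ G W₁) (S : Submodule ℂ W₁)
    (τ : Representation ℂ G W₂) (T : Submodule ℂ W₂) : Submodule ℂ (↥S →ₗ[ℂ] ↥T) where
  carrier := {φ | ∀ (g : G) (x : S) (hx : ρ g ↑x ∈ S), (φ ⟨ρ g ↑x, hx⟩ : W₂) = τ g ↑(φ x)}
  add_mem' := by
    intro φ ψ hφ hψ g x hx
    simp [hφ g x hx, hψ g x hx]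
  zero_mem' := by intro g x hx; simp
  smul_mem' := by
    intro c φ hφ g x hx
    simp [hφ g x hx]

/-- Isomorphism of representations. -/
def IsoRep (ρ : Representation ℂ G W₁) (τ : Representation ℂ G W₂) : Prop :=
  ∃ e : W₁ ≃ₗ[ℂ] W₂, ∀ (g : G) (x : W₁), e (ρ g x) = τ g (e x)

/-- Equivariant isomorphism from a representation onto an invariant subspace. -/
def IsoFullSub (ρ : Representation ℂ G W₁) (τ : Representation ℂ G W₂)
    (T : Submodule ℂ W₂) : Prop :=
  ∃ e : W₁ ≃ₗ[ℂ] ↥T, ∀ (g : G) (x : W₁), (e (ρ g x) : W₂) = τ g ↑(e x)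

/-- Equivariant isomorphism from an invariant subspace onto a representation. -/
def IsoSubFull (ρ : Representation ℂ G W₁) (S : Submodule ℂ W₁)
    (τ : Representation ℂ G W₂) : Prop :=
  ∃ e : ↥S ≃ₗ[ℂ] W₂, ∀ (g : G) (x : S) (hx : ρ g ↑x ∈ S), e ⟨ρ g ↑x, hx⟩ = τ g (e x)

/-- Equivariant isomorphism between invariant subspaces. -/
def IsoSubSub (ρ : Representation ℂ G W₁) (S : Submodule ℂ W₁)
    (τ : Representation ℂ G W₂) (T : Submodule ℂ W₂) : Prop :=
  ∃ e : ↥S ≃ₗ[ℂ] ↥T, ∀ (g : G) (x : S) (hx : ρ g ↑x ∈ S),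
    (e ⟨ρ g ↑x, hx⟩ : W₂) = τ g ↑(e x)

/-- The operator `π(e_H) = |H|⁻¹ ∑_{h ∈ H} π(h)`. -/
def avgMap (π : Representation ℂ G W) (H : Subgroup G) [Finite H] : W →ₗ[ℂ] W :=
  letI : Fintype H := Fintype.ofFinite H
  (Nat.card H : ℂ)⁻¹ • ∑ h : H, π (h : G)

/-- The subspace `W^H` of `H`-fixed vectors. -/
def fixedSub (π : Representation ℂ G W) (H : Subgroup G) : Submodule ℂ W where
  carrier := {w | ∀ h ∈ H, π h w = w}
  add_mem' := by
    intro a b ha hb h hh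
    simp [ha h hh, hb h hh]
  zero_mem' := by intro h hh; simp
  smul_mem' := by
    intro c a ha h hh
    simp [ha h hh]

/-- Restriction of a representation to a subgroup. -/
def resRep (π : Representation ℂ G W) (L : Subgroup G) : Representation ℂ ↥L W :=
  π.comp L.subtype

/-- The right-translation representation of `G` on the function space `G → W`. -/
def rtRep (G : Type*) [Group G] (W : Type*) [AddCommGroup W] [Module ℂ W] :
    Representation ℂ G (G → W) where
  toFun g :=
    { toFun := fun f x => f (x * g)
      map_add' := fun _ _ => rfl
      map_smul' := fun _ _ => rfl }
  map_one' := LinearMap.ext fun f => funext fun x => by simp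
  map_mul' := fun g₁ g₂ => LinearMap.ext fun f => funext fun x => by
    simp [mul_assoc]

/-- The left-translation representation of `G` on the function space `G → W`. -/
def ltRep (G : Type*) [Group G] (W : Type*) [AddCommGroup W] [Module ℂ W] :
    Representation ℂ G (G → W) where
  toFun g :=
    { toFun := fun f x => f (g⁻¹ * x)
      map_add' := fun _ _ => rfl
      map_smul' := fun _ _ => rfl }
  map_one' := LinearMap.ext fun f => funext fun x => by simp
  map_mul' := fun g₁ g₂ => LinearMap.ext fun f => funext fun x => by
    simp [mul_assoc]

/-- Left translation by a fixed group element, as a linear operator on `G → W`. -/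
def lTrans (W : Type*) [AddCommGroup W] [Module ℂ W] (g : G) : (G → W) →ₗ[ℂ] (G → W) where
  toFun f := fun x => f (g * x)
  map_add' := fun _ _ => rfl
  map_smul' := fun _ _ => rfl

/-- The averaging operator `I_U : f ↦ (j ↦ |U|⁻¹ ∑_{u ∈ U} f(u·j))` on `G → W`. -/
def avgL (U : Subgroup G) [Finite U] (W : Type*) [AddCommGroup W] [Module ℂ W] :
    (G → W) →ₗ[ℂ] (G → W) :=
  letI : Fintype U := Fintype.ofFinite U
  (Nat.card U : ℂ)⁻¹ • ∑ u : U, lTrans W (u : G)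

/-- The module `Ind_{LU}^G (infl_L^{LU} ρ)` of functions `f : G → W` with
`f(u·l·g) = ρ(l)·f(g)` for `u ∈ U`, `l ∈ L`; `G` acts by right translation (`rtRep`).
This is the standard concrete model of `ℂ[G]·e_U ⊗_{ℂ[L]} ρ`. -/
def indInfl (U L : Subgroup G) {W : Type*} [AddCommGroup W] [Module ℂ W]
    (ρ : Representation ℂ ↥L W) : Submodule ℂ (G → W) where
  carrier := {f | ∀ (u l g : G) (hu : u ∈ U) (hl : l ∈ L),
    f (u * l * g) = ρ ⟨l, hl⟩ (f g)}
  add_mem' := by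
    intro f₁ f₂ h₁ h₂ u l g hu hl
    simp [h₁ u l g hu hl, h₂ u l g hu hl]
  zero_mem' := by intro u l g hu hl; simp
  smul_mem' := by
    intro c f hf u l g hu hl
    simp [hf u l g hu hl]

/-- Parahoric induction `i_{U,V} ρ = ℂ[G]e_V e_U ⊗_{ℂ[L]} ρ`, realized concretely as the
image of the averaging operator `I_U` on `Ind_{LV}^G (infl ρ)`; `G` acts by `rtRep`. -/
def parInd (U L V : Subgroup G) [Finite U] {W : Type*} [AddCommGroup W] [Module ℂ W]
    (ρ : Representation ℂ ↥L W) : Submodule ℂ (G → W) :=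
  (indInfl V L ρ).map (avgL U W)

/-- Parahoric restriction `r_{U,V} π`: the image of the operator `π(e_U)·π(e_V)`. -/
def parRes (π : Representation ℂ G W) (U V : Subgroup G) [Finite U] [Finite V] :
    Submodule ℂ W :=
  LinearMap.range (avgMap π U ∘ₗ avgMap π V)

/-- Conjugation `l ↦ w·l·w⁻¹` as an endomorphism of a subgroup `L` normalized by `w`. -/
def conjHom (L : Subgroup G) (w : G) (hw : ∀ l ∈ L, w * l * w⁻¹ ∈ L) : ↥L →* ↥L where
  toFun l := ⟨w * ↑l * w⁻¹, hw ↑l l.2⟩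
  map_one' := by ext; simp
  map_mul' := fun a b => by ext; simp [mul_assoc]

/-- External direct sum of two representations of the same group. -/
def pairRep (ρ : Representation ℂ G W₁) (τ : Representation ℂ G W₂) :
    Representation ℂ G (W₁ × W₂) where
  toFun g := (ρ g).prodMap (τ g)
  map_one' := by ext x <;> simp
  map_mul' := fun g₁ g₂ => by ext x <;> simp

/-- The induced module `ℂ[G] ⊗_{ℂ[J]} W` (for `J ≤ G` of finite index this is all of the
induced module; in general, its "compactly induced" variant is `cInd`): functions
`f : G → W` with `f(g·j) = π(j)⁻¹ f(g)`, the action of `G` being left translation. -/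
def indUp (J : Subgroup G) {W : Type*} [AddCommGroup W] [Module ℂ W]
    (π : Representation ℂ ↥J W) : Submodule ℂ (G → W) where
  carrier := {f | ∀ (g : G) (j : ↥J), f (g * ↑j) = π j⁻¹ (f g)}
  add_mem' := by
    intro f₁ f₂ h₁ h₂ g j
    simp [h₁ g j, h₂ g j]
  zero_mem' := by intro g j; simp
  smul_mem' := by
    intro c f hf g j
    simp [hf g j]

/-- The induced module `ℂ[G] ⊗_{ℂ[J]} W` for an arbitrary subgroup `J` of a (possibly
infinite) group `G`: functions `f : G → W` with `f(g·j) = π(j)⁻¹ f(g)` supported on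
finitely many cosets `g·J`; the action of `G` is left translation (`ltRep`). -/
def cInd (J : Subgroup G) {W : Type*} [AddCommGroup W] [Module ℂ W]
    (π : Representation ℂ ↥J W) : Submodule ℂ (G → W) where
  carrier := {f | (∀ (g : G) (j : ↥J), f (g * ↑j) = π j⁻¹ (f g)) ∧
    ∃ S : Set G, S.Finite ∧ ∀ g : G, f g ≠ 0 → ∃ s ∈ S, ∃ j : ↥J, g = s * ↑j}
  add_mem' := by
    rintro f₁ f₂ ⟨h₁, S₁, hS₁, hS₁'⟩ ⟨h₂, S₂, hS₂, hS₂'⟩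
    refine ⟨fun g j => by simp [h₁ g j, h₂ g j], S₁ ∪ S₂, hS₁.union hS₂, fun g hg => ?_⟩
    by_cases hf₁ : f₁ g = 0
    · have hf₂ : f₂ g ≠ 0 := by
        intro h
        exact hg (by simp [Pi.add_apply, hf₁, h])
      obtain ⟨s, hs, j, hj⟩ := hS₂' g hf₂
      exact ⟨s, Set.mem_union_right _ hs, j, hj⟩
    · obtain ⟨s, hs, j, hj⟩ := hS₁' g hf₁
      exact ⟨s, Set.mem_union_left _ hs, j, hj⟩
  zero_mem' := by
    refine ⟨fun g j => by simp, ∅, Set.finite_empty, fun g hg => absurd rfl hg⟩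
  smul_mem' := by
    rintro c f ⟨h, S, hS, hS'⟩
    refine ⟨fun g j => by simp [h g j], S, hS, fun g hg => ?_⟩
    apply hS'
    intro h0
    exact hg (by simp [Pi.smul_apply, h0])

/-- The space of functions `f : J → ℂ` with `f(b·g) = χ(b)·f(g)`: the concrete model of the
induced representation `Ind_B^J χ` of a one-dimensional character, `J` acting by `rtRep`. -/
def indChar {J : Type*} [Group J] (B : Subgroup J) (χ : ↥B →* ℂˣ) :
    Submodule ℂ (J → ℂ) where
  carrier := {f | ∀ (b : ↥B) (g : J), f (↑b * g) = (χ b : ℂ) * f g}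
  add_mem' := by
    intro f₁ f₂ h₁ h₂ b g
    simp [h₁ b g, h₂ b g, mul_add]
  zero_mem' := by intro b g; simp
  smul_mem' := by
    intro c f hf b g
    simp [hf b g]
    ring

/-- The space `Hom_{J ∩ t⁻¹Jt}(π, π^t)` of linear maps `φ` with
`φ ∘ π(x) = π(t·x·t⁻¹) ∘ φ` for all `x ∈ J ∩ t⁻¹Jt`. -/
def twistedIntertwiners {W : Type*} [AddCommGroup W] [Module ℂ W]
    (J : Subgroup G) (π : Representation ℂ ↥J W) (t : G) :
    Submodule ℂ (W →ₗ[ℂ] W) where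
  carrier := {φ | ∀ (x : G) (hx : x ∈ J) (hx' : t * x * t⁻¹ ∈ J),
    φ ∘ₗ π ⟨x, hx⟩ = π ⟨t * x * t⁻¹, hx'⟩ ∘ₗ φ}
  add_mem' := by
    intro φ ψ hφ hψ x hx hx'
    simp only [LinearMap.add_comp, LinearMap.comp_add, hφ x hx hx', hψ x hx hx']
  zero_mem' := by intro x hx hx'; simp
  smul_mem' := by
    intro c φ hφ x hx hx'
    simp only [LinearMap.smul_comp, LinearMap.comp_smul, hφ x hx hx']

/-- The dimension `dim_ℂ S` of a subspace `S` (e.g. of a space of intertwining maps). -/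
def dimC {M : Type*} [AddCommGroup M] [Module ℂ M] (S : Submodule ℂ M) : ℕ :=
  Module.finrank ℂ ↥S

/-- Finite-dimensionality of a subspace over `ℂ`. -/
def IsFinDimSub {M : Type*} [AddCommGroup M] [Module ℂ M] (S : Submodule ℂ M) : Prop :=
  FiniteDimensional ℂ ↥S

end Reps

set_option linter.unusedSectionVars false

section Aux5

variable {J : Type*} [Group J] [Fintype J]
variable {W : Type*} [AddCommGroup W] [Module ℂ W]

lemma avgL_apply' (H : Subgroup J) [Fintype ↥H] (f : J → W) (x : J) :
    avgL H W f x = (Nat.card ↥H : ℂ)⁻¹ • ∑ h : ↥H, f ((h : J) * x) := by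
  unfold avgL
  rw [Subsingleton.elim (Fintype.ofFinite ↥H) ‹Fintype ↥H›]
  simp [lTrans]

lemma avgL_of_invariant (H : Subgroup J) [Fintype ↥H] {f : J → W}
    (hf : ∀ (h x : J), h ∈ H → f (h * x) = f x) : avgL H W f = f := by
  funext x
  rw [avgL_apply']
  have : ∀ h : ↥H, f ((h : J) * x) = f x := fun h => hf _ _ h.2
  rw [Finset.sum_congr rfl fun h _ => this h, Finset.sum_const, Finset.card_univ,
    ← Nat.card_eq_fintype_card, ← Nat.cast_smul_eq_nsmul ℂ, smul_smul,
    inv_mul_cancel₀, one_smul]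
  exact_mod_cast Nat.card_pos.ne'

lemma avgL_left_invariant (H : Subgroup J) [Fintype ↥H] (f : J → W) (h x : J)
    (hh : h ∈ H) : avgL H W f (h * x) = avgL H W f x := by
  rw [avgL_apply', avgL_apply']
  congr 1
  exact Fintype.sum_equiv (Equiv.mulRight (⟨h, hh⟩ : ↥H)) _ _
    (fun u => by simp [mul_assoc])

lemma avgL_idem (H : Subgroup J) [Fintype ↥H] (f : J → W) :
    avgL H W (avgL H W f) = avgL H W f :=
  avgL_of_invariant H (fun h x hh => avgL_left_invariant H f h x hh)

lemma avgL_rtRep (H : Subgroup J) [Fintype ↥H] (f : J → W) (g : J) :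
    avgL H W (rtRep J W g f) = rtRep J W g (avgL H W f) := by
  funext x
  show avgL H W (rtRep J W g f) x = avgL H W f (x * g)
  rw [avgL_apply', avgL_apply']
  congr 1
  exact Finset.sum_congr rfl fun h _ => by show f _ = f _; rw [mul_assoc]

end Aux5

set_option linter.unusedSectionVars false

section Aux6

variable {J : Type*} [Group J] [Fintype J]
variable {W : Type*} [AddCommGroup W] [Module ℂ W]

lemma indInfl_left_mul {V L : Subgroup J} {ρ : Representation ℂ ↥L W} {f : J → W}
    (hf : f ∈ indInfl V L ρ) (l y : J) (hl : l ∈ L) :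
    f (l * y) = ρ ⟨l, hl⟩ (f y) := by
  have := hf 1 l y (one_mem V) hl
  simpa using this

lemma indInfl_left_inv {V L : Subgroup J} {ρ : Representation ℂ ↥L W} {f : J → W}
    (hf : f ∈ indInfl V L ρ) (v y : J) (hv : v ∈ V) :
    f (v * y) = f y := by
  have := hf v 1 y hv (one_mem L)
  rw [show ((⟨1, one_mem L⟩ : ↥L)) = 1 from rfl, map_one] at this
  simpa using this

/-- Conjugation by `l⁻¹` as an equiv of a subgroup normalized by `l`. -/
def conjEquiv' (U : Subgroup J) (l : J) (hl : l ∈ Subgroup.normalizer (U : Set J)) : ↥U ≃ ↥U where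
  toFun u := ⟨l⁻¹ * ↑u * l, by
    have := (Subgroup.mem_normalizer_iff.mp (inv_mem hl) (u : J)).mp u.2
    simpa using this⟩
  invFun u := ⟨l * ↑u * l⁻¹, (Subgroup.mem_normalizer_iff.mp hl (u : J)).mp u.2⟩
  left_inv u := by ext; simp [mul_assoc]
  right_inv u := by ext; simp [mul_assoc]

lemma avgL_mem_indInfl (U' L : Subgroup J) [Fintype ↥U'] (hN : L ≤ Subgroup.normalizer (U' : Set J))
    {ρ : Representation ℂ ↥L W} {f : J → W}
    (hf : ∀ (l y : J) (hl : l ∈ L), f (l * y) = ρ ⟨l, hl⟩ (f y)) :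
    avgL U' W f ∈ indInfl U' L ρ := by
  intro u l g hu hl
  rw [avgL_apply', avgL_apply']
  have step1 : ∑ w : ↥U', f ((w : J) * (u * l * g)) = ∑ w : ↥U', f ((w : J) * (l * g)) :=
    Fintype.sum_equiv (Equiv.mulRight (⟨u, hu⟩ : ↥U')) _ _
      (fun w => by simp [mul_assoc])
  have step2 : ∀ w : ↥U', f ((w : J) * (l * g)) =
      ρ ⟨l, hl⟩ (f ((l⁻¹ * (w : J) * l) * g)) := by
    intro w
    have h1 : (w : J) * (l * g) = l * ((l⁻¹ * (w : J) * l) * g) := by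
      group
    rw [h1, hf l _ hl]
  have step3 : ∑ w : ↥U', f (((conjEquiv' U' l (hN hl)) w : J) * g)
      = ∑ w : ↥U', f ((w : J) * g) :=
    Equiv.sum_comp (conjEquiv' U' l (hN hl)) (fun w : ↥U' => f ((w : J) * g))
  calc (Nat.card ↥U' : ℂ)⁻¹ • ∑ w : ↥U', f ((w : J) * (u * l * g))
      = (Nat.card ↥U' : ℂ)⁻¹ • ∑ w : ↥U', ρ ⟨l, hl⟩ (f ((l⁻¹ * (w : J) * l) * g)) := by
        rw [step1]; exact congrArg _ (Finset.sum_congr rfl fun w _ => step2 w)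
    _ = ρ ⟨l, hl⟩ ((Nat.card ↥U' : ℂ)⁻¹ • ∑ w : ↥U', f ((w : J) * g)) := by
        rw [map_smul, map_sum]
        congr 1
        exact Fintype.sum_equiv (conjEquiv' U' l (hN hl)) _ _ (fun w => rfl)

end Aux6

set_option linter.unusedSectionVars false

section Aux7

variable {J : Type*} [Group J] [Fintype J]
variable {W : Type*} [AddCommGroup W] [Module ℂ W] [FiniteDimensional ℂ W]

/-- A positive-definite sesquilinear form on `J → W`. -/
noncomputable def Bf (f g : J → W) : ℂ :=
  ∑ x : J, ∑ i, (starRingEnd ℂ) ((Module.finBasis ℂ W).repr (f x) i) *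
    ((Module.finBasis ℂ W).repr (g x) i)

lemma Bf_zero_right (f : J → W) : Bf f (0 : J → W) = 0 := by
  simp [Bf]

lemma Bf_self_eq_zero {f : J → W} (h : Bf f f = 0) : f = 0 := by
  have key : Bf f f =
      ((∑ x : J, ∑ i, Complex.normSq ((Module.finBasis ℂ W).repr (f x) i) : ℝ) : ℂ) := by
    unfold Bf
    push_cast
    exact Finset.sum_congr rfl fun x _ => Finset.sum_congr rfl fun i _ =>
      Complex.normSq_eq_conj_mul_self.symm
  rw [key] at h
  have h0 : (∑ x : J, ∑ i, Complex.normSq ((Module.finBasis ℂ W).repr (f x) i)) = 0 :=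
    Complex.ofReal_eq_zero.mp h
  have h1 : ∀ x : J, ∀ i, Complex.normSq ((Module.finBasis ℂ W).repr (f x) i) = 0 := by
    intro x i
    have hx := (Finset.sum_eq_zero_iff_of_nonneg (fun x _ => Finset.sum_nonneg
      (fun i _ => Complex.normSq_nonneg _))).mp h0 x (Finset.mem_univ x)
    exact (Finset.sum_eq_zero_iff_of_nonneg (fun i _ => Complex.normSq_nonneg _)).mp hx i
      (Finset.mem_univ i)
  funext x
  have hrepr : (Module.finBasis ℂ W).repr (f x) = 0 := by
    ext i
    exact Complex.normSq_eq_zero.mp (h1 x i)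
  simpa using (LinearEquiv.map_eq_zero_iff _).mp hrepr

lemma Bf_conj_symm (f g : J → W) : Bf f g = (starRingEnd ℂ) (Bf g f) := by
  unfold Bf
  rw [map_sum]
  refine Finset.sum_congr rfl fun x _ => ?_
  rw [map_sum]
  refine Finset.sum_congr rfl fun i _ => ?_
  rw [map_mul, Complex.conj_conj, mul_comm]

/-- `Bf f ·` as a linear map. -/
noncomputable def BfR (f : J → W) : (J → W) →ₗ[ℂ] ℂ where
  toFun g := Bf f g
  map_add' g₁ g₂ := by
    simp [Bf, mul_add, Finset.sum_add_distrib]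
  map_smul' c g := by
    simp [Bf, Finset.mul_sum, mul_left_comm]

lemma Bf_smul_right (c : ℂ) (f g : J → W) : Bf f (c • g) = c * Bf f g :=
  (BfR f).map_smul c g

lemma Bf_sum_right {ι : Type*} (s : Finset ι) (F : ι → (J → W)) (f : J → W) :
    Bf f (∑ k ∈ s, F k) = ∑ k ∈ s, Bf f (F k) :=
  map_sum (BfR f) F s

lemma Bf_smul_left (c : ℂ) (f g : J → W) :
    Bf (c • f) g = (starRingEnd ℂ) c * Bf f g := by
  rw [Bf_conj_symm, Bf_smul_right, map_mul, ← Bf_conj_symm]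

lemma Bf_sum_left {ι : Type*} (s : Finset ι) (F : ι → (J → W)) (g : J → W) :
    Bf (∑ k ∈ s, F k) g = ∑ k ∈ s, Bf (F k) g := by
  rw [Bf_conj_symm, Bf_sum_right, map_sum]
  exact Finset.sum_congr rfl fun k _ => (Bf_conj_symm _ _).symm

lemma Bf_lTrans (a : J) (f g : J → W) :
    Bf (fun x => f (a * x)) g = Bf f (fun x => g (a⁻¹ * x)) := by
  unfold Bf
  exact Fintype.sum_equiv (Equiv.mulLeft a) _ _
    (fun x => by simp [inv_mul_cancel_left])

lemma avgL_eq_smul_sum (H : Subgroup J) [Fintype ↥H] (f : J → W) :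
    avgL H W f = (Nat.card ↥H : ℂ)⁻¹ • ∑ h : ↥H, (fun x => f ((h : J) * x)) := by
  funext x
  rw [avgL_apply']
  simp

lemma Bf_avg (H : Subgroup J) [Fintype ↥H] (f g : J → W) :
    Bf (avgL H W f) g = Bf f (avgL H W g) := by
  have hc : (starRingEnd ℂ) ((Nat.card ↥H : ℂ)⁻¹) = (Nat.card ↥H : ℂ)⁻¹ := by
    simp [map_inv₀]
  rw [avgL_eq_smul_sum, avgL_eq_smul_sum, Bf_smul_left, Bf_smul_right, hc,
    Bf_sum_left, Bf_sum_right]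
  congr 1
  have step : ∀ h : ↥H, Bf (fun x => f ((h : J) * x)) g
      = Bf f (fun x => g (((h : J))⁻¹ * x)) := fun h => Bf_lTrans _ f g
  rw [Finset.sum_congr rfl fun h _ => step h]
  exact Fintype.sum_equiv (Equiv.inv ↥H) _ _ (fun h => by simp)

lemma avg_inj_step (U V : Subgroup J) [Fintype ↥U] [Fintype ↥V] (f : J → W)
    (hV : avgL V W f = f) (h0 : avgL V W (avgL U W f) = 0) :
    avgL U W f = 0 := by
  apply Bf_self_eq_zero
  have h1 : Bf (avgL U W f) (avgL U W f) = Bf f (avgL U W f) := by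
    rw [Bf_avg, avgL_idem]
  have h2 : Bf f (avgL U W f) = 0 := by
    have hz : Bf (avgL V W f) (avgL U W f) = 0 := by rw [Bf_avg, h0, Bf_zero_right]
    rwa [hV] at hz
  rw [h1, h2]

end Aux7

section Statement5

variable {J : Type*} [Group J] [Fintype J]

/-- Let `J = ULV` be a finite group with an Iwahori decomposition.  For every
finite-dimensional `ℂ[L]`-module `ρ` there is an isomorphism of `ℂ[J]`-modules
`i_{U,V}ρ = ℂ[J]e_V e_U ⊗_{ℂ[L]} ρ ≅ ℂ[J]e_U e_V ⊗_{ℂ[L]} ρ = i_{V,U}ρ`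
(each side realized concretely as the image of an averaging operator inside an
induced module). -/
theorem parInd_swap_iso
    (U L V : Subgroup J) (hIw : IwahoriDecomp (⊤ : Subgroup J) U L V)
    {W : Type*} [AddCommGroup W] [Module ℂ W] [FiniteDimensional ℂ W]
    (ρ : Representation ℂ ↥L W) :
    IsoSubSub (rtRep J W) (parInd U L V ρ) (rtRep J W) (parInd V L U ρ) := by
  classical
  letI : Fintype ↥U := Fintype.ofFinite ↥U
  letI : Fintype ↥V := Fintype.ofFinite ↥V
  obtain ⟨hNU, hNV, -⟩ := hIw
  have hmemX : ∀ f ∈ parInd U L V ρ, f ∈ indInfl U L ρ := by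
    intro f hf
    obtain ⟨g, hg, rfl⟩ := Submodule.mem_map.mp hf
    exact avgL_mem_indInfl U L hNU (indInfl_left_mul hg)
  have hmemY : ∀ f ∈ parInd V L U ρ, f ∈ indInfl V L ρ := by
    intro f hf
    obtain ⟨g, hg, rfl⟩ := Submodule.mem_map.mp hf
    exact avgL_mem_indInfl V L hNV (indInfl_left_mul hg)
  have hfixV : ∀ f, f ∈ indInfl V L ρ → avgL V W f = f := fun f hf =>
    avgL_of_invariant V (fun v x hv => indInfl_left_inv hf v x hv)
  have hfixU : ∀ f, f ∈ indInfl U L ρ → avgL U W f = f := fun f hf =>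
    avgL_of_invariant U (fun v x hv => indInfl_left_inv hf v x hv)
  have hmapXY : ∀ f ∈ parInd U L V ρ, avgL V W f ∈ parInd V L U ρ := fun f hf =>
    Submodule.mem_map_of_mem (hmemX f hf)
  have hmapYX : ∀ f ∈ parInd V L U ρ, avgL U W f ∈ parInd U L V ρ := fun f hf =>
    Submodule.mem_map_of_mem (hmemY f hf)
  have hinjV : ∀ f ∈ parInd U L V ρ, avgL V W f = 0 → f = 0 := by
    intro f hf h0
    obtain ⟨g, hg, rfl⟩ := Submodule.mem_map.mp hf
    exact avg_inj_step U V g (hfixV g hg) h0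
  have hinjU : ∀ f ∈ parInd V L U ρ, avgL U W f = 0 → f = 0 := by
    intro f hf h0
    obtain ⟨g, hg, rfl⟩ := Submodule.mem_map.mp hf
    exact avg_inj_step V U g (hfixU g hg) h0
  let φ : ↥(parInd U L V ρ) →ₗ[ℂ] ↥(parInd V L U ρ) := (avgL V W).restrict hmapXY
  let ψ : ↥(parInd V L U ρ) →ₗ[ℂ] ↥(parInd U L V ρ) := (avgL U W).restrict hmapYX
  have hφ : Function.Injective φ := by
    rw [← LinearMap.ker_eq_bot, LinearMap.ker_eq_bot']
    intro x hx
    have h := congrArg (fun y : ↥(parInd V L U ρ) => (y : J → W)) hx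
    simp only [φ, LinearMap.restrict_apply, ZeroMemClass.coe_zero] at h
    exact Subtype.ext (hinjV _ x.2 h)
  have hψ : Function.Injective ψ := by
    rw [← LinearMap.ker_eq_bot, LinearMap.ker_eq_bot']
    intro x hx
    have h := congrArg (fun y : ↥(parInd U L V ρ) => (y : J → W)) hx
    simp only [ψ, LinearMap.restrict_apply, ZeroMemClass.coe_zero] at h
    exact Subtype.ext (hinjU _ x.2 h)
  have hdim : Module.finrank ℂ ↥(parInd U L V ρ) = Module.finrank ℂ ↥(parInd V L U ρ) :=
    le_antisymm (LinearMap.finrank_le_finrank_of_injective hφ)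
      (LinearMap.finrank_le_finrank_of_injective hψ)
  refine ⟨φ.linearEquivOfInjective hφ hdim, ?_⟩
  have happ : ∀ z : ↥(parInd U L V ρ),
      ((φ.linearEquivOfInjective hφ hdim) z : J → W) = avgL V W (z : J → W) := by
    intro z
    rw [LinearMap.linearEquivOfInjective_apply]
    rfl
  intro g x hx
  rw [happ, happ]
  exact avgL_rtRep V ((x : ↥(parInd U L V ρ)) : J → W) g

end Statement5


end Parahoric
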